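/- (Small mean implies short-time decay) Let s > 0, d ≥ 1 and 0 ≤ λ < 1. There exist constants α₁ > 0 and t₀ > 0, depending only on (s, d, λ), with the following property: for every ℤ^d-periodic function f : ℝ^d → ℂ that is square integrable on [0,1]^d and satisfies |∫_{[0,1]^d} f dx| ≤ λ (∫_{[0,1]^d} |f|² dx)^{1/2}, and for every 0 < t < t₀, one has ∑_{k ∈ ℤ^d} e^{−2t|k|^s} |ĉ_k(f)|² ≤ e^{−2α₁ t} ∫_{[0,1]^d} |f|² dx. (By Parseval this says ‖e^{−tΛ^s} f‖_{L²(𝕋^d)} ≤ e^{−α₁ t} ‖f‖_{L²(𝕋^d)}.) -/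

import Mathlib

open MeasureTheory

/-- The unit cube `[0,1]^d`, a fundamental domain for `ℤ^d`-periodic functions. -/
def unitBox (d : ℕ) : Set (Fin d → ℝ) :=
  Set.univ.pi fun _ : Fin d => Set.Icc (0 : ℝ) 1

/-- The `k`-th Fourier coefficient `ĉ_k(f) = ∫_{[0,1]^d} f(x) e^{-2πi k·x} dx`. -/
noncomputable def torusCoeff {d : ℕ} (f : (Fin d → ℝ) → ℂ) (k : Fin d → ℤ) : ℂ :=
  ∫ x in unitBox d,
    f x * Complex.exp (-(2 * Real.pi * Complex.I) * (∑ i, (k i : ℂ) * (x i : ℂ)))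

namespace Stmt14Aux

/-- The character `x ↦ e^{2πi k·x}`. -/
noncomputable def Ek {d : ℕ} (k : Fin d → ℤ) (x : Fin d → ℝ) : ℂ :=
  Complex.exp ((2 * Real.pi * Complex.I) * (∑ i, (k i : ℂ) * (x i : ℂ)))

lemma measurableSet_unitBox (d : ℕ) : MeasurableSet (unitBox d) :=
  MeasurableSet.univ_pi fun _ => measurableSet_Icc

lemma isFiniteMeasure_unitBox (d : ℕ) :
    IsFiniteMeasure ((volume : Measure (Fin d → ℝ)).restrict (unitBox d)) := by
  constructor
  rw [Measure.restrict_apply_univ]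
  exact (isCompact_univ_pi fun _ => isCompact_Icc).measure_lt_top

lemma oneDim (m : ℤ) :
    (∫ y in Set.Icc (0:ℝ) 1, Complex.exp ((2 * Real.pi * Complex.I * m) * y))
      = if m = 0 then 1 else 0 := by
  rcases eq_or_ne m 0 with hm | hm
  · simp [hm, Real.volume_Icc]
  · have hc : (2 * Real.pi * Complex.I * m : ℂ) ≠ 0 := by
      apply mul_ne_zero
      apply mul_ne_zero
      apply mul_ne_zero
      · norm_num
      · exact_mod_cast Complex.ofReal_ne_zero.mpr Real.pi_ne_zero
      · exact Complex.I_ne_zero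
      · exact_mod_cast (Int.cast_ne_zero (α := ℂ)).mpr hm
    rw [if_neg hm, MeasureTheory.integral_Icc_eq_integral_Ioc,
      ← intervalIntegral.integral_of_le (zero_le_one), integral_exp_mul_complex hc]
    have h1 : Complex.exp (2 * Real.pi * Complex.I * m * (1:ℝ)) = 1 := by
      push_cast
      rw [mul_one, mul_comm]
      exact Complex.exp_int_mul_two_pi_mul_I m
    have h0 : Complex.exp (2 * Real.pi * Complex.I * m * (0:ℝ)) = 1 := by
      push_cast; rw [mul_zero, Complex.exp_zero]
    rw [h1, h0, sub_self, zero_div]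

lemma indicator_unitBox {d : ℕ} (g : Fin d → ℝ → ℂ) (x : Fin d → ℝ) :
    Set.indicator (unitBox d) (fun x => ∏ i, g i (x i)) x
      = ∏ i, Set.indicator (Set.Icc (0:ℝ) 1) (g i) (x i) := by
  by_cases hx : x ∈ unitBox d
  · rw [Set.indicator_of_mem hx]
    exact Finset.prod_congr rfl fun i _ =>
      (Set.indicator_of_mem (hx i (Set.mem_univ i)) _).symm
  · rw [Set.indicator_of_notMem hx]
    have : ∃ i, x i ∉ Set.Icc (0:ℝ) 1 := by
      by_contra h
      push_neg at h
      exact hx fun i _ => h i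
    obtain ⟨i, hi⟩ := this
    exact (Finset.prod_eq_zero (Finset.mem_univ i)
      (Set.indicator_of_notMem hi _)).symm

lemma integral_Ek {d : ℕ} (k : Fin d → ℤ) :
    (∫ x in unitBox d, Ek k x) = if k = 0 then 1 else 0 := by
  have h1 : ∀ x : Fin d → ℝ,
      Ek k x = ∏ i, Complex.exp ((2 * Real.pi * Complex.I * (k i : ℂ)) * (x i : ℂ)) := by
    intro x
    rw [Ek, Finset.mul_sum, Complex.exp_sum]
    exact Finset.prod_congr rfl fun i _ => by ring_nf
  simp_rw [h1]
  rw [← MeasureTheory.integral_indicator (measurableSet_unitBox d)]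
  simp_rw [indicator_unitBox (fun i y => Complex.exp ((2 * Real.pi * Complex.I * (k i : ℂ)) * (y : ℂ)))]
  rw [MeasureTheory.volume_pi, MeasureTheory.integral_fintype_prod_eq_prod
    (fun i => Set.indicator (Set.Icc (0:ℝ) 1)
      (fun y : ℝ => Complex.exp ((2 * Real.pi * Complex.I * (k i : ℂ)) * (y : ℂ))))]
  simp_rw [MeasureTheory.integral_indicator measurableSet_Icc]
  have h2 : ∀ i, (∫ y in Set.Icc (0:ℝ) 1,
      Complex.exp ((2 * Real.pi * Complex.I * (k i : ℂ)) * (y : ℂ)))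
        = if k i = 0 then 1 else 0 := fun i => oneDim (k i)
  simp_rw [h2]
  rcases eq_or_ne k 0 with hk | hk
  · simp [hk]
  · obtain ⟨i, hi⟩ := Function.ne_iff.mp hk
    rw [if_neg hk]
    exact Finset.prod_eq_zero (Finset.mem_univ i) (by simpa using hi)

lemma norm_Ek {d : ℕ} (k : Fin d → ℤ) (x : Fin d → ℝ) : ‖Ek k x‖ = 1 := by
  have hsum : (∑ i, (k i : ℂ) * (x i : ℂ)) = ((∑ i, (k i : ℝ) * x i : ℝ) : ℂ) := by
    push_cast; rfl
  rw [Ek, hsum, Complex.norm_exp]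
  have : ((2 * Real.pi * Complex.I) * ((∑ i, (k i : ℝ) * x i : ℝ) : ℂ)).re = 0 := by
    simp [Complex.mul_re, Complex.mul_im]
  rw [this, Real.exp_zero]

lemma continuous_Ek {d : ℕ} (k : Fin d → ℤ) : Continuous (Ek k) := by
  apply Complex.continuous_exp.comp
  apply continuous_const.mul
  exact continuous_finset_sum _ fun i _ =>
    continuous_const.mul (Complex.continuous_ofReal.comp (continuous_apply i))

lemma memℒp_Ek {d : ℕ} (k : Fin d → ℤ) :
    MemLp (Ek k) 2 ((volume : Measure (Fin d → ℝ)).restrict (unitBox d)) := by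
  haveI := isFiniteMeasure_unitBox d
  exact MemLp.of_bound (continuous_Ek k).aestronglyMeasurable 1
    (Filter.Eventually.of_forall fun x => (norm_Ek k x).le)

lemma conj_Ek {d : ℕ} (k : Fin d → ℤ) (x : Fin d → ℝ) :
    (starRingEnd ℂ) (Ek k x) = Ek (-k) x := by
  rw [Ek, Ek, ← Complex.exp_conj]
  congr 1
  simp only [map_mul, map_sum, Complex.conj_I, Complex.conj_ofReal, map_ofNat, map_intCast,
    Pi.neg_apply, Int.cast_neg, neg_mul, Finset.sum_neg_distrib]
  ring

lemma Ek_mul {d : ℕ} (k l : Fin d → ℤ) (x : Fin d → ℝ) :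
    Ek k x * Ek l x = Ek (k + l) x := by
  rw [Ek, Ek, Ek, ← Complex.exp_add, ← mul_add, ← Finset.sum_add_distrib]
  congr 2
  refine Finset.sum_congr rfl fun i _ => ?_
  simp only [Pi.add_apply, Int.cast_add]
  ring

lemma Ek_neg_eq {d : ℕ} (k : Fin d → ℤ) (x : Fin d → ℝ) :
    Ek (-k) x = Complex.exp (-(2 * Real.pi * Complex.I) * (∑ i, (k i : ℂ) * (x i : ℂ))) := by
  rw [Ek]
  congr 1
  simp only [Pi.neg_apply, Int.cast_neg, neg_mul, Finset.sum_neg_distrib]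
  ring

section L2

variable {d : ℕ}

/-- The characters as elements of `L²` of the unit box. -/
noncomputable def vEk (k : Fin d → ℤ) :
    Lp ℂ 2 ((volume : Measure (Fin d → ℝ)).restrict (unitBox d)) :=
  (memℒp_Ek k).toLp (Ek k)

lemma inner_vEk_toLp (k : Fin d → ℤ) (g : (Fin d → ℝ) → ℂ)
    (hg : MemLp g 2 ((volume : Measure (Fin d → ℝ)).restrict (unitBox d))) :
    (inner ℂ (vEk k) (hg.toLp g) : ℂ) = ∫ x in unitBox d, Ek (-k) x * g x := by
  rw [MeasureTheory.L2.inner_def]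
  refine integral_congr_ae ?_
  filter_upwards [(memℒp_Ek k).coeFn_toLp, hg.coeFn_toLp] with x h1 h2
  have h1' : (vEk k : (Fin d → ℝ) → ℂ) x = Ek k x := h1
  rw [h1', h2, RCLike.inner_apply', conj_Ek]

lemma orthonormal_vEk : Orthonormal ℂ (vEk (d := d)) := by
  rw [orthonormal_iff_ite]
  intro k l
  rw [show vEk l = (memℒp_Ek l).toLp (Ek l) from rfl, inner_vEk_toLp k (Ek l) (memℒp_Ek l)]
  simp_rw [Ek_mul]
  rw [integral_Ek]
  congr 1
  simp [neg_add_eq_zero, eq_comm]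

lemma torusCoeff_eq_inner (f : (Fin d → ℝ) → ℂ)
    (hf : MemLp f 2 ((volume : Measure (Fin d → ℝ)).restrict (unitBox d))) (k : Fin d → ℤ) :
    torusCoeff f k = (inner ℂ (vEk k) (hf.toLp f) : ℂ) := by
  rw [inner_vEk_toLp k f hf, torusCoeff]
  refine integral_congr_ae (Filter.Eventually.of_forall fun x => ?_)
  show f x * _ = Ek (-k) x * f x
  rw [Ek_neg_eq, mul_comm]

lemma norm_toLp_sq (f : (Fin d → ℝ) → ℂ)
    (hf : MemLp f 2 ((volume : Measure (Fin d → ℝ)).restrict (unitBox d))) :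
    ‖hf.toLp f‖ ^ 2 = ∫ x in unitBox d, ‖f x‖ ^ 2 := by
  rw [← @inner_self_eq_norm_sq ℂ, MeasureTheory.L2.inner_def]
  have h : (∫ x, (inner ℂ ((hf.toLp f :
        Lp ℂ 2 ((volume : Measure (Fin d → ℝ)).restrict (unitBox d))) x)
          ((hf.toLp f : Lp ℂ 2 ((volume : Measure (Fin d → ℝ)).restrict (unitBox d))) x) : ℂ)
        ∂((volume : Measure (Fin d → ℝ)).restrict (unitBox d)))
      = ((∫ x in unitBox d, ‖f x‖ ^ 2 : ℝ) : ℂ) := by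
    rw [show (((∫ x in unitBox d, ‖f x‖ ^ 2 : ℝ)) : ℂ) = RCLike.ofReal (K := ℂ)
      (∫ x in unitBox d, ‖f x‖ ^ 2 : ℝ) from rfl, ← integral_ofReal]
    refine integral_congr_ae ?_
    filter_upwards [hf.coeFn_toLp] with x hx
    rw [hx, RCLike.inner_apply', mul_comm, Complex.mul_conj, Complex.normSq_eq_norm_sq]
    push_cast
    rfl
  rw [h]
  simp [RCLike.re_to_complex]

end L2

end Stmt14Aux

set_option maxHeartbeats 1000000 in
theorem stmt_14 (d : ℕ) (hd : 1 ≤ d) (s : ℝ) (hs : 0 < s)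
    (lam : ℝ) (hlam0 : 0 ≤ lam) (hlam1 : lam < 1) :
    ∃ α₁ t₀ : ℝ, 0 < α₁ ∧ 0 < t₀ ∧
      ∀ f : (Fin d → ℝ) → ℂ,
        (∀ (x : Fin d → ℝ) (k : Fin d → ℤ), f (x + fun i => (k i : ℝ)) = f x) →
        MemLp f 2 (volume.restrict (unitBox d)) →
        ‖∫ x in unitBox d, f x‖ ≤ lam * Real.sqrt (∫ x in unitBox d, ‖f x‖ ^ 2) →
        ∀ t : ℝ, 0 < t → t < t₀ →
          (∑' k : Fin d → ℤ,
              Real.exp (-2 * t * (Real.sqrt (∑ i, (k i : ℝ) ^ 2)) ^ s)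
                * ‖torusCoeff f k‖ ^ 2)
            ≤ Real.exp (-2 * α₁ * t) * ∫ x in unitBox d, ‖f x‖ ^ 2 := by
  classical
  have hlamsq : lam ^ 2 < 1 := by nlinarith
  refine ⟨(1 - lam ^ 2) / 2, 1 / 2, by nlinarith, by norm_num, ?_⟩
  intro f _hper hf hmean t ht ht'
  haveI := Stmt14Aux.isFiniteMeasure_unitBox d
  set Eng : ℝ := ∫ x in unitBox d, ‖f x‖ ^ 2 with hEngdef
  have hEng0 : 0 ≤ Eng := integral_nonneg fun x => sq_nonneg _
  -- Bessel's inequality and summability for the Fourier coefficients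
  have hcoeff : (fun k : Fin d → ℤ => ‖torusCoeff f k‖ ^ 2)
      = fun k => ‖(inner ℂ (Stmt14Aux.vEk k) (hf.toLp f) : ℂ)‖ ^ 2 :=
    funext fun k => by rw [Stmt14Aux.torusCoeff_eq_inner f hf k]
  have hsummF : Summable (fun k : Fin d → ℤ => ‖torusCoeff f k‖ ^ 2) := by
    rw [hcoeff]
    exact Stmt14Aux.orthonormal_vEk.inner_products_summable _
  have bessel : (∑' k : Fin d → ℤ, ‖torusCoeff f k‖ ^ 2) ≤ Eng := by
    rw [hcoeff, hEngdef, ← Stmt14Aux.norm_toLp_sq f hf]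
    exact Stmt14Aux.orthonormal_vEk.tsum_inner_products_le _
  set F : (Fin d → ℤ) → ℝ := fun k => ‖torusCoeff f k‖ ^ 2 with hFdef
  set a : (Fin d → ℤ) → ℝ := fun k =>
    Real.exp (-2 * t * (Real.sqrt (∑ i, (k i : ℝ) ^ 2)) ^ s) * ‖torusCoeff f k‖ ^ 2 with hadef
  have hFnonneg : ∀ k, 0 ≤ F k := fun k => sq_nonneg _
  have hexp_le_one : ∀ k : Fin d → ℤ,
      Real.exp (-2 * t * (Real.sqrt (∑ i, (k i : ℝ) ^ 2)) ^ s) ≤ 1 := by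
    intro k
    rw [show (1 : ℝ) = Real.exp 0 from (Real.exp_zero).symm]
    apply Real.exp_le_exp.mpr
    have h1 : 0 ≤ (Real.sqrt (∑ i, (k i : ℝ) ^ 2)) ^ s := Real.rpow_nonneg (Real.sqrt_nonneg _) s
    nlinarith
  have ha_nonneg : ∀ k, 0 ≤ a k := fun k =>
    mul_nonneg (Real.exp_nonneg _) (sq_nonneg _)
  have ha_le_F : ∀ k, a k ≤ F k := fun k =>
    mul_le_of_le_one_left (sq_nonneg _) (hexp_le_one k)
  have hsa : Summable a := Summable.of_nonneg_of_le ha_nonneg ha_le_F hsummF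
  -- the zero coefficient
  have hF0 : F 0 ≤ lam ^ 2 * Eng := by
    have h0 : torusCoeff f 0 = ∫ x in unitBox d, f x := by
      rw [torusCoeff]
      refine integral_congr_ae (Filter.Eventually.of_forall fun x => ?_)
      simp
    have h1 : ‖torusCoeff f 0‖ ^ 2 ≤ (lam * Real.sqrt Eng) ^ 2 := by
      rw [h0]
      have := hmean
      nlinarith [norm_nonneg (∫ x in unitBox d, f x), this]
    calc F 0 ≤ (lam * Real.sqrt Eng) ^ 2 := h1
      _ = lam ^ 2 * Eng := by rw [mul_pow, Real.sq_sqrt hEng0]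
  have ha0 : a 0 = F 0 := by
    have : (∑ i, (((0 : Fin d → ℤ) i : ℝ)) ^ 2) = 0 := by simp
    rw [hadef]
    simp only [this, Real.sqrt_zero, Real.zero_rpow hs.ne', mul_zero, Real.exp_zero, one_mul]
    rfl
  -- tail estimate
  have hkey : ∀ k : Fin d → ℤ, k ≠ 0 → a k ≤ Real.exp (-2 * t) * F k := by
    intro k hk
    obtain ⟨i, hi⟩ := Function.ne_iff.mp hk
    have hi' : k i ≠ 0 := by simpa using hi
    have h1 : (1 : ℝ) ≤ ∑ j, ((k j : ℝ)) ^ 2 := by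
      have h2 : (1 : ℤ) ≤ (k i) ^ 2 := by
        rcases lt_or_gt_of_ne hi' with h | h <;> nlinarith
      have h3 : (1 : ℝ) ≤ ((k i : ℝ)) ^ 2 := by exact_mod_cast h2
      calc (1 : ℝ) ≤ ((k i : ℝ)) ^ 2 := h3
        _ ≤ ∑ j, ((k j : ℝ)) ^ 2 :=
          Finset.single_le_sum (f := fun j => ((k j : ℝ)) ^ 2)
            (fun j _ => sq_nonneg _) (Finset.mem_univ i)
    have h2 : (1 : ℝ) ≤ Real.sqrt (∑ j, ((k j : ℝ)) ^ 2) := by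
      rw [show (1 : ℝ) = Real.sqrt 1 from (Real.sqrt_one).symm]
      exact Real.sqrt_le_sqrt h1
    have h3 : (1 : ℝ) ≤ (Real.sqrt (∑ j, ((k j : ℝ)) ^ 2)) ^ s := Real.one_le_rpow h2 hs.le
    have h4 : Real.exp (-2 * t * (Real.sqrt (∑ j, ((k j : ℝ)) ^ 2)) ^ s) ≤ Real.exp (-2 * t) := by
      apply Real.exp_le_exp.mpr
      nlinarith
    exact mul_le_mul_of_nonneg_right h4 (sq_nonneg _)
  -- sum manipulations
  have hsplit_a : (∑' k, a k) = a 0 + ∑' k, ite (k = 0) 0 (a k) := Summable.tsum_eq_add_tsum_ite hsa 0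
  have hsplit_F : (∑' k, F k) = F 0 + ∑' k, ite (k = 0) 0 (F k) := Summable.tsum_eq_add_tsum_ite hsummF 0
  have hsum_ite_a : Summable (fun k => ite (k = 0) 0 (a k)) :=
    Summable.of_nonneg_of_le (fun k => by split_ifs <;> simp [ha_nonneg])
      (fun k => by split_ifs <;> simp [ha_le_F, hFnonneg]) hsummF
  have hsum_exp_F : Summable (fun k : Fin d → ℤ => ite (k = 0) 0 (Real.exp (-2 * t) * F k)) :=
    Summable.of_nonneg_of_le
      (fun k => by split_ifs <;> positivity)
      (fun k => by
        split_ifs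
        · simp [hFnonneg]
        · exact mul_le_of_le_one_left (hFnonneg k) (by
            rw [show (1 : ℝ) = Real.exp 0 from (Real.exp_zero).symm]
            exact Real.exp_le_exp.mpr (by nlinarith)))
      hsummF
  have htail : (∑' k, ite (k = 0) 0 (a k)) ≤ Real.exp (-2 * t) * (Eng - F 0) := by
    have step1 : (∑' k, ite (k = 0) 0 (a k))
        ≤ ∑' k, ite (k = 0) 0 (Real.exp (-2 * t) * F k) := by
      refine Summable.tsum_le_tsum (fun k => ?_) hsum_ite_a hsum_exp_F
      split_ifs with h
      · exact le_rfl
      · exact hkey k h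
    have step2 : (∑' k, ite (k = 0) 0 (Real.exp (-2 * t) * F k))
        = Real.exp (-2 * t) * ∑' k, ite (k = 0) 0 (F k) := by
      rw [← tsum_mul_left]
      exact tsum_congr fun k => by split_ifs <;> simp
    have step3 : (∑' k, ite (k = 0) 0 (F k)) ≤ Eng - F 0 := by
      have := hsplit_F
      linarith [bessel]
    calc (∑' k, ite (k = 0) 0 (a k))
        ≤ ∑' k, ite (k = 0) 0 (Real.exp (-2 * t) * F k) := step1
      _ = Real.exp (-2 * t) * ∑' k, ite (k = 0) 0 (F k) := step2
      _ ≤ Real.exp (-2 * t) * (Eng - F 0) :=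
          mul_le_mul_of_nonneg_left step3 (Real.exp_nonneg _)
  have htotal : (∑' k, a k) ≤ F 0 + Real.exp (-2 * t) * (Eng - F 0) := by
    rw [hsplit_a, ha0]
    linarith
  -- final elementary inequality
  have hfinal : F 0 + Real.exp (-2 * t) * (Eng - F 0)
      ≤ Real.exp (-2 * ((1 - lam ^ 2) / 2) * t) * Eng := by
    have harg : -2 * ((1 - lam ^ 2) / 2) * t = -((1 - lam ^ 2) * t) := by ring
    rw [harg]
    set u : ℝ := Real.exp (-2 * t) with hu
    set v : ℝ := Real.exp (-((1 - lam ^ 2) * t)) with hv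
    have hu_pos : 0 < u := Real.exp_pos _
    have huexp : u * Real.exp (2 * t) = 1 := by
      rw [hu, ← Real.exp_add]; norm_num
    have hexp2t : 2 * t + 1 ≤ Real.exp (2 * t) := Real.add_one_le_exp (2 * t)
    have hu1 : u * (1 + 2 * t) ≤ 1 := by nlinarith
    have hv1 : 1 - (1 - lam ^ 2) * t ≤ v := by
      have := Real.add_one_le_exp (-((1 - lam ^ 2) * t))
      rw [← hv] at this
      linarith
    have hu_le : u ≤ 1 - t := by
      have hpos : (0:ℝ) < 1 + 2 * t := by linarith
      have hstep : u * (1 + 2 * t) ≤ (1 - t) * (1 + 2 * t) := by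
        nlinarith [mul_nonneg ht.le (show (0:ℝ) ≤ 1 - 2 * t by linarith)]
      exact le_of_mul_le_mul_right hstep hpos
    have h1u : 0 ≤ 1 - u := by linarith
    have hmain : lam ^ 2 + u * (1 - lam ^ 2) ≤ v := by
      have hp : (1 - lam ^ 2) * u ≤ (1 - lam ^ 2) * (1 - t) :=
        mul_le_mul_of_nonneg_left hu_le (by nlinarith)
      nlinarith [hp, hv1]
    have hA : F 0 * (1 - u) ≤ lam ^ 2 * Eng * (1 - u) :=
      mul_le_mul_of_nonneg_right hF0 h1u
    have hB : (lam ^ 2 + u * (1 - lam ^ 2)) * Eng ≤ v * Eng :=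
      mul_le_mul_of_nonneg_right hmain hEng0
    nlinarith [hA, hB]
  linarith [htotal, hfinal]
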